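/- Let x : [n] → [c] be a token sequence with x_k = k for all k ≤ c (the first c tokens traverse the vocabulary), let f : [c] → 2^{[c]} satisfy f(x) ≠ ∅ for all x, let V = {v_k}_{k=1}^n be a good sequence in ℝ^d converging to Z = {z_x}_{x∈[c]} with parameter γ, and let A be a nice attention map with parameter ψ that reflects f. Set N = max_{y∈[c]} ‖z_y‖, F_{y,k} = #{j ≤ k : x_j = y}, R_k = Σ_{y∈f(x_k)} F_{y,k}, and z̃_k = Σ_{y∈f(x_k)} (F_{y,k}/R_k)·z_y. Then for every k with c < k ≤ n, ‖(AV)_k − z̃_k‖ ≤ (2ψγ + Ncψ)/√k. -/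

import Mathlib

open Finset

private lemma telescope_sum (G : ℕ → ℝ) (m : ℕ) :
    ((m + 1 : ℕ) : ℝ) * G m + ∑ i ∈ range m, ((i + 1 : ℕ) : ℝ) * (G i - G (i + 1))
      = ∑ i ∈ range (m + 1), G i := by
  induction m with
  | zero => simp
  | succ m ih =>
    rw [sum_range_succ, sum_range_succ (fun i => G i) (m + 1)]
    push_cast at ih ⊢
    linarith

private lemma sum_inv_sqrt_le (k : ℕ) :
    ∑ i ∈ range k, 1 / Real.sqrt ((i : ℝ) + 1) ≤ 2 * Real.sqrt k := by
  induction k with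
  | zero => simp
  | succ k ih =>
    rw [sum_range_succ]
    have hpos : 0 < Real.sqrt ((k : ℝ) + 1) := Real.sqrt_pos.mpr (by positivity)
    have h1 : 1 / Real.sqrt ((k : ℝ) + 1)
        ≤ 2 * Real.sqrt ((k : ℝ) + 1) - 2 * Real.sqrt (k : ℝ) := by
      rw [div_le_iff₀ hpos]
      nlinarith [Real.sq_sqrt (show (0:ℝ) ≤ (k : ℝ) + 1 by positivity),
        Real.sq_sqrt (show (0:ℝ) ≤ (k : ℝ) by positivity),
        Real.sqrt_nonneg (k : ℝ), Real.sqrt_nonneg ((k : ℝ) + 1),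
        sq_nonneg (Real.sqrt ((k : ℝ) + 1) - Real.sqrt (k : ℝ))]
    push_cast
    linarith

private lemma abel_bound (k : ℕ) (hk : 1 ≤ k) (a : ℕ → ℝ) (ha : ∀ j, 0 ≤ a j)
    (ψ : ℝ) (hψ : 0 ≤ ψ)
    (hS : ∀ j ∈ Icc 1 k, ∑ i ∈ Icc 1 j, a i ≤ ψ * j / k) :
    ∑ j ∈ Icc 1 k, a j * (1 / Real.sqrt j) ≤ 2 * ψ / Real.sqrt k := by
  have hk0 : (0:ℝ) < (k : ℝ) := by exact_mod_cast Nat.lt_of_lt_of_le Nat.zero_lt_one hk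
  have hks : 0 < Real.sqrt k := Real.sqrt_pos.mpr hk0
  set G : ℕ → ℝ := fun i => 1 / Real.sqrt ((i : ℝ) + 1) with hG
  set b : ℕ → ℝ := fun i => a (i + 1) with hb
  set P : ℕ → ℝ := fun m => ∑ j ∈ range m, b j with hPdef
  have hIcc_range : ∀ m : ℕ, ∑ j ∈ Icc 1 m, a j = P m := by
    intro m
    rw [← Finset.Ico_add_one_right_eq_Icc, Finset.sum_Ico_eq_sum_range]
    simp [hPdef, hb, Nat.add_comm]
  have hP : ∀ m, 1 ≤ m → m ≤ k → P m ≤ ψ * m / k := by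
    intro m h1 h2
    rw [← hIcc_range]
    exact hS m (mem_Icc.mpr ⟨h1, h2⟩)
  have hPnonneg : ∀ m, 0 ≤ P m := fun m => Finset.sum_nonneg fun j _ => ha _
  have hGnonneg : ∀ i, 0 ≤ G i := fun i => by positivity
  have hGmono : ∀ i, G (i + 1) ≤ G i := by
    intro i
    apply one_div_le_one_div_of_le (Real.sqrt_pos.mpr (by positivity))
    apply Real.sqrt_le_sqrt
    push_cast
    linarith
  have hrw : ∑ j ∈ Icc 1 k, a j * (1 / Real.sqrt j) = ∑ i ∈ range k, G i * b i := by
    rw [← Finset.Ico_add_one_right_eq_Icc, Finset.sum_Ico_eq_sum_range]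
    apply Finset.sum_congr (by congr 1)
    intro i _
    show a (1 + i) * (1 / Real.sqrt (((1 + i : ℕ) : ℝ))) = G i * b i
    simp only [hG, hb]
    rw [Nat.add_comm 1 i]
    push_cast
    ring
  rw [hrw]
  have hbp := Finset.sum_range_by_parts G b k
  have step1 : ∑ i ∈ range k, G i * b i
      = G (k - 1) * P k + ∑ i ∈ range (k - 1), (G i - G (i + 1)) * P (i + 1) := by
    simp only [smul_eq_mul] at hbp
    rw [hbp]
    simp only [hPdef]
    rw [sub_eq_add_neg, ← Finset.sum_neg_distrib]
    congr 1
    apply sum_congr rfl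
    intro i _
    ring
  rw [step1]
  have hPk : P k ≤ ψ := by
    have h := hP k hk le_rfl
    calc P k ≤ ψ * k / k := h
      _ = ψ := by field_simp
  have bound1 : G (k - 1) * P k ≤ G (k - 1) * ψ :=
    mul_le_mul_of_nonneg_left hPk (hGnonneg _)
  have bound2 : ∑ i ∈ range (k - 1), (G i - G (i + 1)) * P (i + 1)
      ≤ ∑ i ∈ range (k - 1), (G i - G (i + 1)) * (ψ * ((i + 1 : ℕ) : ℝ) / k) := by
    apply sum_le_sum
    intro i hi
    exact mul_le_mul_of_nonneg_left
      (hP (i + 1) (by omega) (by have := mem_range.mp hi; omega))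
      (sub_nonneg.mpr (hGmono i))
  have tele := telescope_sum G (k - 1)
  rw [show k - 1 + 1 = k from Nat.succ_pred_eq_of_pos hk] at tele
  calc G (k - 1) * P k + ∑ i ∈ range (k - 1), (G i - G (i + 1)) * P (i + 1)
      ≤ G (k - 1) * ψ + ∑ i ∈ range (k - 1), (G i - G (i + 1)) * (ψ * ((i + 1 : ℕ) : ℝ) / k) :=
        add_le_add bound1 bound2
    _ = (ψ / k) * (((k : ℕ) : ℝ) * G (k - 1)
          + ∑ i ∈ range (k - 1), ((i + 1 : ℕ) : ℝ) * (G i - G (i + 1))) := by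
        rw [mul_add, mul_sum]
        congr 1
        · field_simp
        · apply sum_congr rfl
          intro i _
          field_simp
    _ = (ψ / k) * ∑ i ∈ range k, G i := by rw [tele]
    _ ≤ (ψ / k) * (2 * Real.sqrt k) :=
        mul_le_mul_of_nonneg_left (sum_inv_sqrt_le k) (by positivity)
    _ = 2 * ψ / Real.sqrt k := by
        have hss : Real.sqrt k * Real.sqrt k = (k : ℝ) := Real.mul_self_sqrt hk0.le
        field_simp
        linear_combination ψ * hss


/-- Applying a nice attention map reflecting a set-valued
function `f` to a good sequence: for `c < k ≤ n`, the output
`(A V)_k = ∑_{j=1}^k a_{k,j} v_j` is within `(2ψγ + Ncψ)/√k` of the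
frequency-weighted combination `z̃_k = ∑_{y ∈ f(x_k)} (F_{y,k}/R_k) z_y`. -/
theorem attention_reflecting_setvalued_frequency_bound
    (n c d : ℕ) (hc : 1 ≤ c) (hcn : c ≤ n)
    (x : ℕ → ℕ) (hx : ∀ k ∈ Icc 1 n, x k ∈ Icc 1 c)
    (hx_init : ∀ k ∈ Icc 1 c, x k = k)
    (f : ℕ → Finset ℕ)
    (hf_sub : ∀ y ∈ Icc 1 c, f y ⊆ Icc 1 c)
    (hf_ne : ∀ y ∈ Icc 1 c, (f y).Nonempty)
    (v z : ℕ → EuclideanSpace ℝ (Fin d)) (γ ψ N : ℝ) (hγ : 0 < γ) (hψ : 0 < ψ)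
    (hN : N = (Icc 1 c).sup' (Finset.nonempty_Icc.mpr hc) (fun y => ‖z y‖))
    (A : ℕ → ℕ → ℝ)
    (hA_nonneg : ∀ k j, 0 ≤ A k j)
    (hA_tri : ∀ k j, k < j → A k j = 0)
    (hA_row : ∀ k ∈ Icc 1 n, ∑ j ∈ Icc 1 k, A k j = 1)
    (hA_nice : ∀ k ∈ Icc 1 n, ∀ j ∈ Icc 1 k,
      ∑ i ∈ Icc 1 j, A k i ≤ ψ * j / k)
    (hrefl1 : ∀ k ∈ Icc 1 n, c < k → ∀ j ∈ Icc 1 k, 0 < A k j → x j ∈ f (x k))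
    (hrefl2 : ∀ k ∈ Icc 1 n, ∀ y ∈ f (x k),
      |(∑ j ∈ (Icc 1 k).filter (fun j => x j = y), A k j) -
          (((Icc 1 k).filter (fun j => x j = y)).card : ℝ) /
            ∑ y' ∈ f (x k), (((Icc 1 k).filter (fun j => x j = y')).card : ℝ)|
        ≤ ψ / Real.sqrt k)
    (hgood : ∀ k ∈ Icc 1 n, ‖v k - z (x k)‖ ≤ γ / Real.sqrt k) :
    ∀ k, c < k → k ≤ n →
      ‖(∑ j ∈ Icc 1 k, A k j • v j) -
          ∑ y ∈ f (x k),
            ((((Icc 1 k).filter (fun j => x j = y)).card : ℝ) /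
              (∑ y' ∈ f (x k),
                (((Icc 1 k).filter (fun j => x j = y')).card : ℝ))) • z y‖ ≤
        (2 * ψ * γ + N * c * ψ) / Real.sqrt k := by
  intro k hck hkn
  have hk1 : 1 ≤ k := hc.trans hck.le
  have hkmem : k ∈ Icc 1 n := mem_Icc.mpr ⟨hk1, hkn⟩
  have hxk : x k ∈ Icc 1 c := hx k hkmem
  have hTsub : f (x k) ⊆ Icc 1 c := hf_sub _ hxk
  have hk0 : (0 : ℝ) < (k : ℝ) := by exact_mod_cast Nat.lt_of_lt_of_le Nat.zero_lt_one hk1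
  have hks : 0 < Real.sqrt k := Real.sqrt_pos.mpr hk0
  have hN0 : 0 ≤ N := by
    rw [hN]
    exact le_trans (norm_nonneg (z 1)) (le_sup' (fun y => ‖z y‖) (mem_Icc.mpr ⟨le_refl 1, hc⟩))
  have hzN : ∀ y ∈ Icc 1 c, ‖z y‖ ≤ N := fun y hy => hN ▸ le_sup' (fun y => ‖z y‖) hy
  have hmaps : ∀ j ∈ Icc 1 k, x j ∈ Icc 1 c := by
    intro j hj
    have hj' := mem_Icc.mp hj
    exact hx j (mem_Icc.mpr ⟨hj'.1, hj'.2.trans hkn⟩)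
  set R : ℝ := ∑ y' ∈ f (x k), (((Icc 1 k).filter (fun j => x j = y')).card : ℝ) with hR
  -- fiberwise decomposition of ∑ A k j • z (x j)
  have hfiber : ∑ j ∈ Icc 1 k, A k j • z (x j)
      = ∑ y ∈ f (x k), (∑ j ∈ (Icc 1 k).filter (fun j => x j = y), A k j) • z y := by
    have h1 : ∑ j ∈ Icc 1 k, A k j • z (x j)
        = ∑ y ∈ Icc 1 c, ∑ j ∈ (Icc 1 k).filter (fun j => x j = y), A k j • z (x j) :=
      (Finset.sum_fiberwise_of_maps_to hmaps _).symm
    have h2 : ∀ y, ∑ j ∈ (Icc 1 k).filter (fun j => x j = y), A k j • z (x j)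
        = (∑ j ∈ (Icc 1 k).filter (fun j => x j = y), A k j) • z y := by
      intro y
      rw [Finset.sum_smul]
      apply sum_congr rfl
      intro j hj
      rw [(mem_filter.mp hj).2]
    rw [h1]
    simp only [h2]
    refine (Finset.sum_subset hTsub ?_).symm
    intro y hy hyT
    have hw0 : ∑ j ∈ (Icc 1 k).filter (fun j => x j = y), A k j = 0 := by
      apply Finset.sum_eq_zero
      intro j hj
      obtain ⟨hjk, hxj⟩ := mem_filter.mp hj
      by_contra h
      have hpos : 0 < A k j := lt_of_le_of_ne (hA_nonneg k j) (Ne.symm h)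
      exact hyT (hxj ▸ hrefl1 k hkmem hck j hjk hpos)
    rw [hw0, zero_smul]
  have key : (∑ j ∈ Icc 1 k, A k j • v j) -
        ∑ y ∈ f (x k),
          ((((Icc 1 k).filter (fun j => x j = y)).card : ℝ) / R) • z y
      = (∑ j ∈ Icc 1 k, A k j • (v j - z (x j)))
        + ∑ y ∈ f (x k),
            ((∑ j ∈ (Icc 1 k).filter (fun j => x j = y), A k j)
              - (((Icc 1 k).filter (fun j => x j = y)).card : ℝ) / R) • z y := by
    have e1 : ∑ j ∈ Icc 1 k, A k j • v j
        = (∑ j ∈ Icc 1 k, A k j • (v j - z (x j))) + ∑ j ∈ Icc 1 k, A k j • z (x j) := by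
      rw [← Finset.sum_add_distrib]
      apply sum_congr rfl
      intro j _
      rw [smul_sub]
      abel
    rw [e1, hfiber, add_sub_assoc, ← Finset.sum_sub_distrib]
    congr 1
    apply sum_congr rfl
    intro y _
    rw [sub_smul]
  rw [key]
  have hfirst : ‖∑ j ∈ Icc 1 k, A k j • (v j - z (x j))‖ ≤ 2 * ψ * γ / Real.sqrt k := by
    calc ‖∑ j ∈ Icc 1 k, A k j • (v j - z (x j))‖
        ≤ ∑ j ∈ Icc 1 k, ‖A k j • (v j - z (x j))‖ := norm_sum_le _ _
      _ = ∑ j ∈ Icc 1 k, A k j * ‖v j - z (x j)‖ := by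
          apply sum_congr rfl
          intro j _
          rw [norm_smul, Real.norm_eq_abs, abs_of_nonneg (hA_nonneg k j)]
      _ ≤ ∑ j ∈ Icc 1 k, γ * (A k j * (1 / Real.sqrt j)) := by
          apply sum_le_sum
          intro j hj
          have hj' := mem_Icc.mp hj
          have hv := hgood j (mem_Icc.mpr ⟨hj'.1, hj'.2.trans hkn⟩)
          calc A k j * ‖v j - z (x j)‖ ≤ A k j * (γ / Real.sqrt j) :=
              mul_le_mul_of_nonneg_left hv (hA_nonneg k j)
            _ = γ * (A k j * (1 / Real.sqrt j)) := by ring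
      _ = γ * ∑ j ∈ Icc 1 k, A k j * (1 / Real.sqrt j) := by rw [mul_sum]
      _ ≤ γ * (2 * ψ / Real.sqrt k) := by
          apply mul_le_mul_of_nonneg_left _ hγ.le
          exact abel_bound k hk1 (fun j => A k j) (hA_nonneg k) ψ hψ.le
            (fun j hj => hA_nice k hkmem j hj)
      _ = 2 * ψ * γ / Real.sqrt k := by ring
  have hsecond : ‖∑ y ∈ f (x k),
        ((∑ j ∈ (Icc 1 k).filter (fun j => x j = y), A k j)
          - (((Icc 1 k).filter (fun j => x j = y)).card : ℝ) / R) • z y‖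
      ≤ N * c * ψ / Real.sqrt k := by
    have hcard : ((f (x k)).card : ℝ) ≤ (c : ℝ) := by
      have := Finset.card_le_card hTsub
      rw [Nat.card_Icc] at this
      exact_mod_cast le_trans this (by omega)
    calc ‖∑ y ∈ f (x k),
          ((∑ j ∈ (Icc 1 k).filter (fun j => x j = y), A k j)
            - (((Icc 1 k).filter (fun j => x j = y)).card : ℝ) / R) • z y‖
        ≤ ∑ y ∈ f (x k),
          ‖((∑ j ∈ (Icc 1 k).filter (fun j => x j = y), A k j)
            - (((Icc 1 k).filter (fun j => x j = y)).card : ℝ) / R) • z y‖ := norm_sum_le _ _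
      _ ≤ ∑ y ∈ f (x k), (ψ / Real.sqrt k) * N := by
          apply sum_le_sum
          intro y hy
          rw [norm_smul, Real.norm_eq_abs]
          exact mul_le_mul (hrefl2 k hkmem y hy) (hzN y (hTsub hy)) (norm_nonneg _)
            (le_of_lt (div_pos hψ hks))
      _ = ((f (x k)).card : ℝ) * ((ψ / Real.sqrt k) * N) := by
          rw [sum_const, nsmul_eq_mul]
      _ ≤ (c : ℝ) * ((ψ / Real.sqrt k) * N) := by
          apply mul_le_mul_of_nonneg_right hcard
          exact mul_nonneg (le_of_lt (div_pos hψ hks)) hN0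
      _ = N * c * ψ / Real.sqrt k := by ring
  calc ‖(∑ j ∈ Icc 1 k, A k j • (v j - z (x j)))
        + ∑ y ∈ f (x k),
            ((∑ j ∈ (Icc 1 k).filter (fun j => x j = y), A k j)
              - (((Icc 1 k).filter (fun j => x j = y)).card : ℝ) / R) • z y‖
      ≤ ‖∑ j ∈ Icc 1 k, A k j • (v j - z (x j))‖
        + ‖∑ y ∈ f (x k),
            ((∑ j ∈ (Icc 1 k).filter (fun j => x j = y), A k j)
              - (((Icc 1 k).filter (fun j => x j = y)).card : ℝ) / R) • z y‖ := norm_add_le _ _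
    _ ≤ 2 * ψ * γ / Real.sqrt k + N * c * ψ / Real.sqrt k := add_le_add hfirst hsecond
    _ = (2 * ψ * γ + N * c * ψ) / Real.sqrt k := by ring
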